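/- Let H be a finite group with a normal elementary abelian p-subgroup H₀ such that H/H₀ is cyclic of order prime to p, and let X be a finite solvable p′-group acting on H normalizing H₀. Then there exists an X-invariant complement for H₀ in H, i.e., a subgroup C ≤ H with C ∩ H₀ = 1 and C·H₀ = H that is normalized by X. -/

import Mathlib

open Subgroup MulAction Pointwise SemidirectProduct

noncomputable def qd {G : Type*} [Group G] [Finite G] (N : Subgroup G) [N.Normal]
    [IsMulCommutative N] {T : Set G} (t : IsComplement T (N : Set G)) : N.QuotientDiff :=
  Quotient.mk'' ⟨T, t⟩

theorem aux_conj {G : Type*} [Group G] [Finite G] (N : Subgroup G) [N.Normal]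
    [IsMulCommutative N] (hco : Nat.Coprime (Nat.card N) N.index)
    {K₁ K₂ : Subgroup G} (h1 : IsComplement' N K₁) (h2 : IsComplement' N K₂) :
    ∃ g : G, K₂ = K₁.map (MulAut.conj g).toMonoidHom := by
  classical
  have t1 : IsComplement (K₁ : Set G) (N : Set G) := Subgroup.IsComplement'.symm h1
  have t2 : IsComplement (K₂ : Set G) (N : Set G) := Subgroup.IsComplement'.symm h2
  have key : ∀ (K : Subgroup G) (t : IsComplement (K : Set G) (N : Set G)),
      K = stabilizer G (qd N t) := by
    intro K t
    have hK : IsComplement' N K := Subgroup.IsComplement'.symm t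
    have hle : K ≤ stabilizer G (qd N t) := by
      intro k hk
      have hA : (MulOpposite.op k⁻¹ • (⟨_, t⟩ : N.LeftTransversal)) = ⟨_, t⟩ := by
        apply Subtype.ext
        show MulOpposite.op k⁻¹ • (K : Set G) = (K : Set G)
        ext g
        rw [Set.mem_smul_set_iff_inv_smul_mem]
        simp only [← MulOpposite.op_inv, inv_inv, MulOpposite.smul_eq_mul_unop,
          MulOpposite.unop_op]
        show g * k ∈ K ↔ g ∈ K
        constructor
        · intro hg; simpa using mul_mem hg (inv_mem hk)
        · intro hg; exact mul_mem hg hk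
      show k • (qd N t) = qd N t
      show (Quotient.mk'' (MulOpposite.op k⁻¹ • (⟨_, t⟩ : N.LeftTransversal)) : N.QuotientDiff) = qd N t
      rw [hA]; rfl
    refine Subgroup.eq_of_le_of_card_ge hle ?_
    have c1 : Nat.card N * Nat.card K = Nat.card G := hK.card_mul
    have c2 : Nat.card N * Nat.card (stabilizer G (qd N t))
        = Nat.card G := (Subgroup.isComplement'_stabilizer_of_coprime hco).card_mul
    have hpos : 0 < Nat.card N := Nat.card_pos
    exact le_of_eq (Nat.eq_of_mul_eq_mul_left hpos (c2.trans c1.symm))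
  obtain ⟨h, hh⟩ := Subgroup.exists_smul_eq hco (qd N t1) (qd N t2)
  refine ⟨(h : G), ?_⟩
  have hh' : (h : G) • qd N t1 = qd N t2 := hh
  rw [key K₂ t2, key K₁ t1, ← hh']
  exact stabilizer_smul_eq_stabilizer_map_conj _ _

theorem aux_compl_map {G G' : Type*} [Group G] [Group G'] (e : G ≃* G')
    {N K : Subgroup G} (h : IsComplement' N K) :
    IsComplement' (N.map e.toMonoidHom) (K.map e.toMonoidHom) := by
  rw [isComplement'_def, Subgroup.isComplement_iff_existsUnique]
  intro g
  obtain ⟨⟨⟨n, hn⟩, ⟨k, hk⟩⟩, heq, huniq⟩ := h.existsUnique (e.symm g)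
  simp only at heq
  refine ⟨⟨⟨e n, Subgroup.mem_map_of_mem _ hn⟩, ⟨e k, Subgroup.mem_map_of_mem _ hk⟩⟩, ?_, ?_⟩
  · show e n * e k = g
    rw [← map_mul, heq, MulEquiv.apply_symm_apply]
  · rintro ⟨⟨n', hn'⟩, ⟨k', hk'⟩⟩ hg
    obtain ⟨m, hm, rfl⟩ := hn'
    obtain ⟨l, hl, rfl⟩ := hk'
    have hml : m * l = e.symm g := by
      apply e.injective
      rw [map_mul, MulEquiv.apply_symm_apply]
      exact hg
    have h12 := huniq ⟨⟨m, hm⟩, ⟨l, hl⟩⟩ hml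
    have hmn : m = n := congrArg (fun z : ↥N × ↥K => (z.1 : G)) h12
    have hlk : l = k := congrArg (fun z : ↥N × ↥K => (z.2 : G)) h12
    refine Prod.ext (Subtype.ext ?_) (Subtype.ext ?_)
    · exact congrArg e hmn
    · exact congrArg e hlk

theorem aux_subgroupOf {G : Type*} [Group G] {N K M : Subgroup G} (hNM : N ≤ M)
    (h : IsComplement' N K) :
    IsComplement' (N.subgroupOf M) ((K ⊓ M).subgroupOf M) := by
  rw [isComplement'_def, Subgroup.isComplement_iff_existsUnique]
  intro m
  obtain ⟨⟨⟨n, hn⟩, ⟨k, hk⟩⟩, heq, huniq⟩ := h.existsUnique (m : G)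
  simp only at heq
  have hkM : k ∈ M := by
    have hk' : k = n⁻¹ * (m : G) := by rw [← heq]; group
    rw [hk']; exact mul_mem (inv_mem (hNM hn)) m.2
  refine ⟨⟨⟨⟨n, hNM hn⟩, mem_subgroupOf.mpr hn⟩,
    ⟨⟨k, hkM⟩, mem_subgroupOf.mpr (Subgroup.mem_inf.mpr ⟨hk, hkM⟩)⟩⟩, ?_, ?_⟩
  · exact Subtype.ext heq
  · rintro ⟨⟨n', hn'⟩, ⟨k', hk'⟩⟩ hg
    have hg' : (n' : G) * (k' : G) = (m : G) := congrArg Subtype.val hg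
    have h12 := huniq ⟨⟨(n' : G), mem_subgroupOf.mp hn'⟩,
      ⟨(k' : G), (Subgroup.mem_inf.mp (mem_subgroupOf.mp hk')).1⟩⟩ hg'
    have h1 : (n' : G) = n := congrArg (fun z : ↥N × ↥K => (z.1 : G)) h12
    have h2 : (k' : G) = k := congrArg (fun z : ↥N × ↥K => (z.2 : G)) h12
    exact Prod.ext (Subtype.ext (Subtype.ext h1)) (Subtype.ext (Subtype.ext h2))

theorem aux_compl_of_sup {G : Type*} [Group G] {N K : Subgroup G} [N.Normal]
    (h1 : N ⊓ K = ⊥) (h2 : N ⊔ K = ⊤) : IsComplement' N K := by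
  apply Subgroup.isComplement'_of_disjoint_and_mul_eq_univ (disjoint_iff.mpr h1)
  rw [← Subgroup.normal_mul, h2, Subgroup.coe_top]

theorem aux_map_conj_self {G : Type*} [Group G] (N : Subgroup G) [hN : N.Normal] (g : G) :
    N.map (MulAut.conj g).toMonoidHom = N := by
  ext x
  simp only [Subgroup.mem_map, MulEquiv.coe_toMonoidHom, MulAut.conj_apply]
  constructor
  · rintro ⟨n, hn, rfl⟩; exact hN.conj_mem n hn g
  · intro hx; exact ⟨g⁻¹ * x * g, by simpa using hN.conj_mem x hx g⁻¹, by group⟩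

/-- Let `H` be a finite group with a normal elementary abelian
`p`-subgroup `H₀` such that `H/H₀` is cyclic of order prime to `p`, and let `X` be a finite
solvable `p′`-group acting on `H` (by automorphisms) normalizing `H₀`.  Then there exists an
`X`-invariant complement for `H₀` in `H`, i.e. a subgroup `C ≤ H` with `C ∩ H₀ = 1` and
`C·H₀ = H` that is normalized by `X`. -/
theorem stmt_18 {H : Type*} [Group H] [Finite H] (p : ℕ) (hp : p.Prime)
    (H₀ : Subgroup H) (hnorm : H₀.Normal)
    (habel : ∀ a ∈ H₀, ∀ b ∈ H₀, a * b = b * a)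
    (hexp : ∀ a ∈ H₀, a ^ p = 1)
    (hcyc : IsCyclic (H ⧸ H₀)) (hcop : ¬ p ∣ Nat.card (H ⧸ H₀))
    {X : Type*} [Group X] [Finite X] (hsolv : IsSolvable X) (hX : ¬ p ∣ Nat.card X)
    (φ : X →* MulAut H) (hφ : ∀ x : X, H₀.map (φ x).toMonoidHom = H₀) :
    ∃ C : Subgroup H, C ⊓ H₀ = ⊥ ∧ C ⊔ H₀ = ⊤ ∧
      ∀ x : X, C.map (φ x).toMonoidHom = C := by
  classical
  haveI : Fact p.Prime := ⟨hp⟩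
  -- the semidirect product
  let G := H ⋊[φ] X
  let eG : G ≃ H × X :=
    { toFun := fun g => (g.left, g.right)
      invFun := fun q => ⟨q.1, q.2⟩
      left_inv := fun g => rfl
      right_inv := fun q => rfl }
  haveI : Finite G := Finite.of_equiv _ eG.symm
  have hφ' : ∀ (x : X) (h : H), h ∈ H₀ → φ x h ∈ H₀ := fun x h hh =>
    (hφ x) ▸ Subgroup.mem_map_of_mem _ hh
  let N : Subgroup G := H₀.map (inl : H →* G)
  haveI hNnorm : N.Normal := by
    constructor
    intro n hn g
    obtain ⟨h₀, hh₀, rfl⟩ := hn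
    have key : g * inl h₀ * g⁻¹ = inl (g.left * φ g.right h₀ * g.left⁻¹) := by
      conv_lhs => rw [← inl_left_mul_inr_right g]
      rw [map_mul, map_mul, map_inv]
      rw [show (inl g.left * inr g.right : G) * inl h₀ * (inl g.left * inr g.right)⁻¹
          = inl g.left * (inr g.right * inl h₀ * inr g.right⁻¹) * (inl g.left)⁻¹ by
        rw [map_inv]; group]
      rw [← inl_aut]
    rw [key]
    exact Subgroup.mem_map_of_mem _ (hnorm.conj_mem _ (hφ' _ _ hh₀) _)
  haveI hNcomm : IsMulCommutative N := by
    constructor; constructor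
    rintro ⟨a, ha⟩ ⟨b, hb⟩
    obtain ⟨a₀, ha₀, rfl⟩ := ha
    obtain ⟨b₀, hb₀, rfl⟩ := hb
    apply Subtype.ext
    show (inl a₀ : G) * inl b₀ = inl b₀ * inl a₀
    rw [← map_mul, ← map_mul, habel a₀ ha₀ b₀ hb₀]
  -- cardinalities
  have cardN : Nat.card N = Nat.card H₀ :=
    (Nat.card_congr (Subgroup.equivMapOfInjective H₀ _ inl_injective).toEquiv).symm
  have cardG : Nat.card G = Nat.card H * Nat.card X := by
    rw [Nat.card_congr eG, Nat.card_prod]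
  have hNindex : N.index = Nat.card (H ⧸ H₀) * Nat.card X := by
    have h1 : Nat.card H₀ * H₀.index = Nat.card H := Subgroup.card_mul_index H₀
    have h2 : Nat.card N * N.index = Nat.card G := Subgroup.card_mul_index N
    have h3 : H₀.index = Nat.card (H ⧸ H₀) := rfl
    have hpos : 0 < Nat.card H₀ := Nat.card_pos
    apply Nat.eq_of_mul_eq_mul_left hpos
    calc Nat.card H₀ * N.index = Nat.card N * N.index := by rw [cardN]
      _ = Nat.card G := h2
      _ = Nat.card H * Nat.card X := cardG
      _ = Nat.card H₀ * H₀.index * Nat.card X := by rw [h1]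
      _ = Nat.card H₀ * (Nat.card (H ⧸ H₀) * Nat.card X) := by rw [h3, mul_assoc]
  have hpindex : ¬ p ∣ N.index := by
    rw [hNindex]
    intro hdvd
    rcases (Nat.Prime.dvd_mul hp).mp hdvd with h | h
    exacts [hcop h, hX h]
  have hpN : IsPGroup p N := by
    have : IsPGroup p H₀ := fun h => ⟨1, Subtype.ext (by
      rw [pow_one]
      exact hexp _ h.2)⟩
    exact this.map _
  have hco : Nat.Coprime (Nat.card N) N.index := by
    obtain ⟨n, hn⟩ := IsPGroup.iff_card.mp hpN
    rw [hn]
    exact Nat.Coprime.pow_left n ((Nat.Prime.coprime_iff_not_dvd hp).mpr hpindex)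
  -- Schur-Zassenhaus
  obtain ⟨K, hK⟩ := Subgroup.exists_right_complement'_of_coprime hco
  -- the subgroup generated by N and X
  let X' : Subgroup G := (inr : X →* G).range
  let M : Subgroup G := N ⊔ X'
  have hNM : N ≤ M := le_sup_left
  have hX'M : X' ≤ M := le_sup_right
  have hinf : N ⊓ X' = ⊥ := by
    rw [eq_bot_iff]
    rintro g ⟨hgN, hgX⟩
    obtain ⟨h₀, hh₀, rfl⟩ := hgN
    obtain ⟨x, hx⟩ := hgX
    have : h₀ = 1 := by
      have := congrArg SemidirectProduct.left hx
      exact this.symm.trans (left_inr _)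
    rw [this, map_one]
    exact Subgroup.mem_bot.mpr rfl
  -- complements of N.subgroupOf M in M
  have hco' : Nat.Coprime (Nat.card (N.subgroupOf M)) (N.subgroupOf M).index := by
    have hcard : Nat.card (N.subgroupOf M) = Nat.card N :=
      Nat.card_congr (Subgroup.subgroupOfEquivOfLe hNM).toEquiv
    have hdvd : (N.subgroupOf M).index ∣ N.index := Subgroup.relIndex_dvd_index_of_normal N M
    rw [hcard]
    exact Nat.Coprime.coprime_dvd_right hdvd hco
  have hK' : IsComplement' (N.subgroupOf M) ((K ⊓ M).subgroupOf M) := aux_subgroupOf hNM hK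
  have hX'' : IsComplement' (N.subgroupOf M) (X'.subgroupOf M) := by
    apply aux_compl_of_sup
    · rw [eq_bot_iff]
      rintro m ⟨hmN, hmX⟩
      have : (m : G) ∈ N ⊓ X' := ⟨mem_subgroupOf.mp hmN, mem_subgroupOf.mp hmX⟩
      rw [hinf, Subgroup.mem_bot] at this
      exact Subgroup.mem_bot.mpr (Subtype.ext this)
    · rw [eq_top_iff]
      rintro m -
      have hm : (m : G) ∈ ((N ⊔ X' : Subgroup G) : Set G) := m.2
      rw [Subgroup.normal_mul] at hm
      obtain ⟨n, hn, x, hx, hnx⟩ := hm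
      have hmeq : m = (⟨n, hNM hn⟩ : M) * ⟨x, hX'M hx⟩ := Subtype.ext hnx.symm
      rw [hmeq]
      exact mul_mem (Subgroup.mem_sup_left (mem_subgroupOf.mpr hn))
        (Subgroup.mem_sup_right (mem_subgroupOf.mpr hx))
  -- conjugate K so that it contains X'
  obtain ⟨m, hm⟩ := aux_conj (N.subgroupOf M) hco' hK' hX''
  let Kc : Subgroup G := K.map (MulAut.conj (m : G)).toMonoidHom
  have hKc : IsComplement' N Kc := by
    have := aux_compl_map (MulAut.conj (m : G)) hK
    rwa [aux_map_conj_self] at this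
  have hXKc : X' ≤ Kc := by
    intro g hg
    have hgM : (⟨g, hX'M hg⟩ : M) ∈ X'.subgroupOf M := mem_subgroupOf.mpr hg
    rw [hm] at hgM
    obtain ⟨k, hk, hkeq⟩ := hgM
    have hkK : (k : G) ∈ K := (Subgroup.mem_inf.mp (mem_subgroupOf.mp hk)).1
    refine ⟨(k : G), hkK, ?_⟩
    have := congrArg (Subgroup.subtype M) hkeq
    simpa using this
  -- pull back to H
  let C : Subgroup H := Kc.comap (inl : H →* G)
  have hmemC : ∀ h : H, h ∈ C ↔ (inl h : G) ∈ Kc := fun h => Iff.rfl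
  refine ⟨C, ?_, ?_, ?_⟩
  · rw [eq_bot_iff]
    rintro h ⟨hC, h0⟩
    have h1 : (inl h : G) ∈ N := Subgroup.mem_map_of_mem _ h0
    have h2 : (inl h : G) ∈ N ⊓ Kc := ⟨h1, hC⟩
    rw [hKc.disjoint.eq_bot, Subgroup.mem_bot] at h2
    have : h = 1 := inl_injective (by rw [h2, map_one])
    exact Subgroup.mem_bot.mpr this
  · rw [eq_top_iff]
    rintro h -
    obtain ⟨⟨⟨n, hn⟩, ⟨k, hk⟩⟩, heq, -⟩ := hKc.existsUnique (inl h : G)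
    simp only at heq
    obtain ⟨h₀, hh₀, rfl⟩ := hn
    have hkC : k = inl (h₀⁻¹ * h) := by
      rw [map_mul, map_inv, ← heq]; group
    have hC : h₀⁻¹ * h ∈ C := by
      rw [hmemC, ← hkC]; exact hk
    have : h = h₀ * (h₀⁻¹ * h) := by group
    rw [this]
    exact mul_mem (Subgroup.mem_sup_right hh₀) (Subgroup.mem_sup_left hC)
  · -- invariance
    have hinr : ∀ x : X, (inr x : G) ∈ Kc := fun x => hXKc ⟨x, rfl⟩
    have hiff : ∀ (x : X) (h : H), φ x h ∈ C ↔ h ∈ C := by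
      intro x h
      rw [hmemC, hmemC, inl_aut]
      constructor
      · intro hh
        have h2 := mul_mem (mul_mem (inv_mem (hinr x)) hh) (hinr x)
        have : (inr x : G)⁻¹ * (inr x * inl h * inr x⁻¹) * inr x = inl h := by
          rw [map_inv]; group
        rwa [this] at h2
      · intro hh
        have : (inr x⁻¹ : G) ∈ Kc := by rw [map_inv]; exact inv_mem (hinr x)
        exact mul_mem (mul_mem (hinr x) hh) this
    intro x
    ext h
    rw [Subgroup.mem_map]
    constructor
    · rintro ⟨h', hh', rfl⟩
      exact (hiff x h').mpr hh'
    · intro hh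
      refine ⟨(φ x⁻¹) h, (hiff x⁻¹ h).mpr hh, ?_⟩
      show (φ x) ((φ x⁻¹) h) = h
      rw [map_inv]
      exact MulAut.apply_inv_self H (φ x) h
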